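/- arXiv:0910.2830 — 2 statements merged into one kernel-verified Lean document; each statement's English description precedes it below -/
import Mathlib

section
/- Let M be a skew-symmetric 6×6 matrix over GF(3), written in nine 2×2 blocks M_{ij} (1 ≤ i,j ≤ 3). Then every two not necessarily distinct elements of F4 are opposite with respect to M (i.e., F4 is a partial perp-system for M) if and only if: the diagonal blocks M₁₁, M₂₂, M₃₃ each equal X or −X; the blocks M₁₂, M₁₃, M₂₃ are invertible; the three block-row sums M₁₁+M₁₂+M₁₃, M₂₁+M₂₂+M₂₃, M₃₁+M₃₂+M₃₃ are invertible; and the sum of all nine blocks of M is nonzero. -/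
open Matrix

abbrev F3 := ZMod 3
abbrev V6 := Fin 6 → F3

/-- The line (2-dim subspace) represented by a 2×6 matrix: the span of its rows. -/
def lineOf (A : Matrix (Fin 2) (Fin 6) F3) : Submodule F3 V6 :=
  Submodule.span F3 (Set.range A)

/-- The perp of a subspace `W` with respect to a 6×6 Gram matrix `M`:
`{x | xᵀ M w = 0 for all w ∈ W}`. -/
def perp (M : Matrix (Fin 6) (Fin 6) F3) (W : Submodule F3 V6) : Submodule F3 V6 where
  carrier := {x | ∀ w ∈ W, x ⬝ᵥ M.mulVec w = 0}
  add_mem' := by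
    intro a b ha hb w hw
    simp only [Set.mem_setOf_eq] at *
    rw [add_dotProduct, ha w hw, hb w hw, add_zero]
  zero_mem' := by
    intro w hw
    exact zero_dotProduct _
  smul_mem' := by
    intro c x hx w hw
    simp only [Set.mem_setOf_eq] at *
    rw [smul_dotProduct, hx w hw, smul_zero]

/-- A 2×6 matrix built from three 2×2 blocks. -/
def blk3 (A B C : Matrix (Fin 2) (Fin 2) F3) : Matrix (Fin 2) (Fin 6) F3 :=
  Matrix.of fun i j => ![A, B, C] ⟨(j : ℕ) / 2, by omega⟩ i ⟨(j : ℕ) % 2, by omega⟩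

/-- A 6×6 matrix built from nine 2×2 blocks. -/
def blk33 (M : Matrix (Fin 3) (Fin 3) (Matrix (Fin 2) (Fin 2) F3)) :
    Matrix (Fin 6) (Fin 6) F3 :=
  Matrix.of fun i j =>
    M ⟨(i : ℕ) / 2, by omega⟩ ⟨(j : ℕ) / 2, by omega⟩ ⟨(i : ℕ) % 2, by omega⟩ ⟨(j : ℕ) % 2, by omega⟩

/-- The 2×2 block of a 6×6 matrix in block-position `(i, j)`. -/
def blkAt (M : Matrix (Fin 6) (Fin 6) F3) (i j : Fin 3) : Matrix (Fin 2) (Fin 2) F3 :=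
  Matrix.of fun a b => M ⟨2 * (i : ℕ) + (a : ℕ), by omega⟩ ⟨2 * (j : ℕ) + (b : ℕ), by omega⟩

/-- Two (not necessarily distinct) lines are opposite w.r.t. `M` if `ℓ ∩ m^⊥ = 0`. -/
def Opp (M : Matrix (Fin 6) (Fin 6) F3) (ℓ m : Submodule F3 V6) : Prop :=
  ℓ ⊓ perp M m = ⊥

def X2 : Matrix (Fin 2) (Fin 2) F3 := !![0, 1; 2, 0]

/-- The set `F4` of four lines of `PG(5,3)`, i.e. the lines represented by
`(I O O)`, `(O I O)`, `(O O I)` and `(I I I)`. -/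
def F4 : Set (Submodule F3 V6) :=
  {lineOf (blk3 1 0 0), lineOf (blk3 0 1 0), lineOf (blk3 0 0 1), lineOf (blk3 1 1 1)}

/- ### Auxiliary material -/

lemma mem_lineOf {A : Matrix (Fin 2) (Fin 6) F3} {x : V6} :
    x ∈ lineOf A ↔ ∃ c : Fin 2 → F3, A.vecMul c = x := by
  rw [lineOf]; refine (Submodule.mem_span_range_iff_exists_fun (R := F3) (v := A) (x := x)).trans ?_
  constructor
  · rintro ⟨c, hc⟩; exact ⟨c, by funext j; rw [← hc]; simp [Matrix.vecMul, dotProduct]⟩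
  · rintro ⟨c, hc⟩; exact ⟨c, by funext j; rw [← hc]; simp [Matrix.vecMul, dotProduct]⟩

lemma vecMul_mulBt (M : Matrix (Fin 6) (Fin 6) F3) (B : Matrix (Fin 2) (Fin 6) F3)
    (x : V6) (k : Fin 2) : (M * Bᵀ).vecMul x k = x ⬝ᵥ M *ᵥ B k := by
  simp only [Matrix.vecMul, dotProduct, Matrix.mul_apply, Matrix.mulVec,
    Matrix.transpose_apply, Finset.mul_sum, Finset.sum_mul]

lemma mem_perp_lineOf {M : Matrix (Fin 6) (Fin 6) F3} {B : Matrix (Fin 2) (Fin 6) F3} {x : V6} :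
    x ∈ perp M (lineOf B) ↔ (M * Bᵀ).vecMul x = 0 := by
  constructor
  · intro h
    funext k
    rw [vecMul_mulBt]
    exact h (B k) (Submodule.subset_span ⟨k, rfl⟩)
  · intro h w hw
    induction hw using Submodule.span_induction with
    | mem w hw =>
      obtain ⟨k, rfl⟩ := hw
      rw [← vecMul_mulBt M B x k, h]
      rfl
    | zero => simp
    | add u v _ _ hu hv => rw [Matrix.mulVec_add, dotProduct_add, hu, hv, add_zero]
    | smul c u _ hu => rw [Matrix.mulVec_smul, dotProduct_smul, hu, smul_zero]

lemma opp_iff {M : Matrix (Fin 6) (Fin 6) F3} (A : Matrix (Fin 2) (Fin 6) F3)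
    {B : Matrix (Fin 2) (Fin 6) F3}
    (hA : ∀ c : Fin 2 → F3, A.vecMul c = 0 → c = 0) :
    Opp M (lineOf A) (lineOf B) ↔ IsUnit (A * M * Bᵀ) := by
  rw [Opp, Submodule.eq_bot_iff]
  constructor
  · intro h
    rw [Matrix.isUnit_iff_isUnit_det, isUnit_iff_ne_zero, ne_eq,
      ← Matrix.exists_vecMul_eq_zero_iff]
    rintro ⟨c, hc, hc0⟩
    apply hc
    apply hA
    apply h (A.vecMul c)
    refine ⟨mem_lineOf.2 ⟨c, rfl⟩, mem_perp_lineOf.2 ?_⟩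
    rw [Matrix.vecMul_vecMul, ← Matrix.mul_assoc]
    exact hc0
  · intro h x hx
    obtain ⟨c, rfl⟩ := mem_lineOf.1 hx.1
    have hp := mem_perp_lineOf.1 hx.2
    rw [Matrix.vecMul_vecMul, ← Matrix.mul_assoc] at hp
    have : c = 0 := by
      have := congrArg (fun v => (A * M * Bᵀ)⁻¹.vecMul v) hp
      simpa [Matrix.vecMul_vecMul, Matrix.mul_nonsing_inv _
        ((Matrix.isUnit_iff_isUnit_det _).1 h)] using this
    rw [this]
    simp

def E (i : Fin 3) : Matrix (Fin 2) (Fin 6) F3 :=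
  Matrix.of fun a j => if (j : ℕ) = 2 * (i : ℕ) + (a : ℕ) then 1 else 0

def E4 : Matrix (Fin 2) (Fin 6) F3 :=
  Matrix.of fun a j => if (j : ℕ) % 2 = (a : ℕ) then 1 else 0

lemma blk3_100 : blk3 1 0 0 = E 0 := by decide
lemma blk3_010 : blk3 0 1 0 = E 1 := by decide
lemma blk3_001 : blk3 0 0 1 = E 2 := by decide
lemma blk3_111 : blk3 1 1 1 = E4 := by decide

lemma indepE : ∀ i : Fin 3, ∀ c : Fin 2 → F3, (E i).vecMul c = 0 → c = 0 := by decide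
lemma indepE4 : ∀ c : Fin 2 → F3, E4.vecMul c = 0 → c = 0 := by decide

lemma gram (M : Matrix (Fin 6) (Fin 6) F3) (i j : Fin 3) :
    E i * M * (E j)ᵀ = blkAt M i j := by
  fin_cases i <;> fin_cases j <;>
  · ext a b
    fin_cases a <;> fin_cases b <;>
      simp (config := { decide := true }) [E, blkAt, Matrix.mul_apply, Fin.sum_univ_six]

lemma gramR (M : Matrix (Fin 6) (Fin 6) F3) (i : Fin 3) :
    E i * M * E4ᵀ = blkAt M i 0 + blkAt M i 1 + blkAt M i 2 := by
  fin_cases i <;>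
  · ext a b
    fin_cases a <;> fin_cases b <;>
      simp (config := { decide := true }) [E, E4, blkAt, Matrix.mul_apply, Fin.sum_univ_six] <;>
      ring

lemma gramC (M : Matrix (Fin 6) (Fin 6) F3) (j : Fin 3) :
    E4 * M * (E j)ᵀ = blkAt M 0 j + blkAt M 1 j + blkAt M 2 j := by
  fin_cases j <;>
  · ext a b
    fin_cases a <;> fin_cases b <;>
      simp (config := { decide := true }) [E, E4, blkAt, Matrix.mul_apply, Fin.sum_univ_six] <;>
      ring

lemma gramT (M : Matrix (Fin 6) (Fin 6) F3) :
    E4 * M * E4ᵀ =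
      blkAt M 0 0 + blkAt M 0 1 + blkAt M 0 2 +
      blkAt M 1 0 + blkAt M 1 1 + blkAt M 1 2 +
      blkAt M 2 0 + blkAt M 2 1 + blkAt M 2 2 := by
  ext a b
  fin_cases a <;> fin_cases b <;>
    simp (config := { decide := true }) [E4, blkAt, Matrix.mul_apply, Fin.sum_univ_six] <;>
    ring

lemma blkAt_skew {M : Matrix (Fin 6) (Fin 6) F3} (hskew : Mᵀ = -M) (i j : Fin 3) :
    (blkAt M i j)ᵀ = -blkAt M j i := by
  have h : ∀ k l : Fin 6, M l k = -M k l := by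
    intro k l
    have := congrFun (congrFun hskew k) l
    simpa using this
  ext a b
  simp only [blkAt, Matrix.transpose_apply, Matrix.of_apply, Matrix.neg_apply]
  exact h _ _

lemma isUnit_neg_transpose (N : Matrix (Fin 2) (Fin 2) F3) : IsUnit (-Nᵀ) ↔ IsUnit N := by
  rw [Matrix.isUnit_iff_isUnit_det, Matrix.isUnit_iff_isUnit_det, Matrix.det_neg,
    Matrix.det_transpose]
  simp

lemma det_skew_pm : ∀ D : Matrix (Fin 2) (Fin 2) F3, Dᵀ = -D →
    (D.det ≠ 0 ↔ (D = X2 ∨ D = -X2)) := by decide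

lemma det_skew_ne : ∀ D : Matrix (Fin 2) (Fin 2) F3, Dᵀ = -D → (D.det ≠ 0 ↔ D ≠ 0) := by decide

lemma skew_unit_pm {D : Matrix (Fin 2) (Fin 2) F3} (h : Dᵀ = -D) :
    IsUnit D ↔ (D = X2 ∨ D = -X2) := by
  rw [Matrix.isUnit_iff_isUnit_det, isUnit_iff_ne_zero]
  exact det_skew_pm D h

lemma skew_unit_ne {D : Matrix (Fin 2) (Fin 2) F3} (h : Dᵀ = -D) :
    IsUnit D ↔ D ≠ 0 := by
  rw [Matrix.isUnit_iff_isUnit_det, isUnit_iff_ne_zero]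
  exact det_skew_ne D h

/-- For a skew-symmetric 6×6 matrix `M` over `GF(3)`, the set `F4` is a
partial perp-system with respect to `M` if and only if the diagonal blocks are `±X`, the
strictly upper blocks are invertible, the three block-row sums are invertible, and the sum
of all nine blocks is nonzero. -/
theorem stmt0 (M : Matrix (Fin 6) (Fin 6) F3) (hskew : Mᵀ = -M) :
    (∀ ℓ ∈ F4, ∀ m ∈ F4, Opp M ℓ m) ↔
      ((blkAt M 0 0 = X2 ∨ blkAt M 0 0 = -X2) ∧
       (blkAt M 1 1 = X2 ∨ blkAt M 1 1 = -X2) ∧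
       (blkAt M 2 2 = X2 ∨ blkAt M 2 2 = -X2) ∧
       IsUnit (blkAt M 0 1) ∧ IsUnit (blkAt M 0 2) ∧ IsUnit (blkAt M 1 2) ∧
       IsUnit (blkAt M 0 0 + blkAt M 0 1 + blkAt M 0 2) ∧
       IsUnit (blkAt M 1 0 + blkAt M 1 1 + blkAt M 1 2) ∧
       IsUnit (blkAt M 2 0 + blkAt M 2 1 + blkAt M 2 2) ∧
       (blkAt M 0 0 + blkAt M 0 1 + blkAt M 0 2 +
        blkAt M 1 0 + blkAt M 1 1 + blkAt M 1 2 +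
        blkAt M 2 0 + blkAt M 2 1 + blkAt M 2 2 ≠ 0)) := by
  -- skew facts about blocks
  have hdiag : ∀ i : Fin 3, (blkAt M i i)ᵀ = -blkAt M i i := fun i => blkAt_skew hskew i i
  have hlow : ∀ i j : Fin 3, blkAt M j i = -(blkAt M i j)ᵀ := by
    intro i j; rw [blkAt_skew hskew i j, neg_neg]
  have hR : ∀ i : Fin 3,
      (blkAt M i 0 + blkAt M i 1 + blkAt M i 2)ᵀ
        = -(blkAt M 0 i + blkAt M 1 i + blkAt M 2 i) := by
    intro i
    simp only [Matrix.transpose_add, blkAt_skew hskew]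
    abel
  have hCiff : ∀ i : Fin 3,
      IsUnit (blkAt M 0 i + blkAt M 1 i + blkAt M 2 i)
        ↔ IsUnit (blkAt M i 0 + blkAt M i 1 + blkAt M i 2) := by
    intro i
    rw [← isUnit_neg_transpose (blkAt M i 0 + blkAt M i 1 + blkAt M i 2), hR i, neg_neg]
  have hT : (blkAt M 0 0 + blkAt M 0 1 + blkAt M 0 2 +
      blkAt M 1 0 + blkAt M 1 1 + blkAt M 1 2 +
      blkAt M 2 0 + blkAt M 2 1 + blkAt M 2 2)ᵀ
      = -(blkAt M 0 0 + blkAt M 0 1 + blkAt M 0 2 +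
      blkAt M 1 0 + blkAt M 1 1 + blkAt M 1 2 +
      blkAt M 2 0 + blkAt M 2 1 + blkAt M 2 2) := by
    simp only [Matrix.transpose_add, blkAt_skew hskew]
    abel
  have hBiff : ∀ i j : Fin 3, IsUnit (blkAt M j i) ↔ IsUnit (blkAt M i j) := by
    intro i j
    rw [hlow i j, isUnit_neg_transpose]
  -- expand the left-hand side
  have hF4 : F4 = {lineOf (E 0), lineOf (E 1), lineOf (E 2), lineOf E4} := by
    rw [F4, blk3_100, blk3_010, blk3_001, blk3_111]
  rw [hF4]
  simp only [Set.mem_insert_iff, Set.mem_singleton_iff, forall_eq_or_imp, forall_eq]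
  rw [opp_iff (E 0) (indepE 0), opp_iff (E 0) (indepE 0), opp_iff (E 0) (indepE 0),
    opp_iff (E 0) (indepE 0), opp_iff (E 1) (indepE 1), opp_iff (E 1) (indepE 1),
    opp_iff (E 1) (indepE 1), opp_iff (E 1) (indepE 1), opp_iff (E 2) (indepE 2),
    opp_iff (E 2) (indepE 2), opp_iff (E 2) (indepE 2), opp_iff (E 2) (indepE 2),
    opp_iff E4 indepE4, opp_iff E4 indepE4, opp_iff E4 indepE4, opp_iff E4 indepE4,
    gram M 0 0, gram M 0 1, gram M 0 2, gram M 1 0, gram M 1 1, gram M 1 2,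
    gram M 2 0, gram M 2 1, gram M 2 2, gramR M 0, gramR M 1, gramR M 2,
    gramC M 0, gramC M 1, gramC M 2, gramT M]
  constructor
  · rintro ⟨⟨u00, u01, u02, ur0⟩, ⟨u10, u11, u12, ur1⟩, ⟨u20, u21, u22, ur2⟩,
      uc0, uc1, uc2, ut⟩
    exact ⟨(skew_unit_pm (hdiag 0)).1 u00, (skew_unit_pm (hdiag 1)).1 u11,
      (skew_unit_pm (hdiag 2)).1 u22, u01, u02, u12, ur0, ur1, ur2,
      (skew_unit_ne hT).1 ut⟩
  · rintro ⟨d0, d1, d2, u01, u02, u12, ur0, ur1, ur2, tt⟩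
    exact ⟨⟨(skew_unit_pm (hdiag 0)).2 d0, u01, u02, ur0⟩,
      ⟨(hBiff 0 1).2 u01, (skew_unit_pm (hdiag 1)).2 d1, u12, ur1⟩,
      ⟨(hBiff 0 2).2 u02, (hBiff 1 2).2 u12, (skew_unit_pm (hdiag 2)).2 d2, ur2⟩,
      (hCiff 0).2 ur0, (hCiff 1).2 ur1, (hCiff 2).2 ur2, (skew_unit_ne hT).2 tt⟩
end

section
/- Let R and S be any 2×2 matrices over GF(3), and let M be a skew-symmetric 6×6 matrix over GF(3). Then the five lines represented by (I O O), (O I O), (O O I), (I I I), (I R S) are all totally isotropic with respect to M if and only if M has 2×2 block form [[O, A, B], [−Aᵀ, O, C], [−Bᵀ, −Cᵀ, O]] for some 2×2 matrices A, B, C over GF(3) such that both A + B + C and A·Rᵀ + B·Sᵀ + R·C·Sᵀ are symmetric matrices. -/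
open Matrix

private lemma blk3_app_0 (X Y Z : Matrix (Fin 2) (Fin 2) F3) (i : Fin 2) : blk3 X Y Z i 0 = X i 0 := rfl
private lemma blk3_app_1 (X Y Z : Matrix (Fin 2) (Fin 2) F3) (i : Fin 2) : blk3 X Y Z i 1 = X i 1 := rfl
private lemma blk3_app_2 (X Y Z : Matrix (Fin 2) (Fin 2) F3) (i : Fin 2) : blk3 X Y Z i 2 = Y i 0 := rfl
private lemma blk3_app_3 (X Y Z : Matrix (Fin 2) (Fin 2) F3) (i : Fin 2) : blk3 X Y Z i 3 = Y i 1 := rfl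
private lemma blk3_app_4 (X Y Z : Matrix (Fin 2) (Fin 2) F3) (i : Fin 2) : blk3 X Y Z i 4 = Z i 0 := rfl
private lemma blk3_app_5 (X Y Z : Matrix (Fin 2) (Fin 2) F3) (i : Fin 2) : blk3 X Y Z i 5 = Z i 1 := rfl
private lemma blk33_app_0_0 (N : Matrix (Fin 3) (Fin 3) (Matrix (Fin 2) (Fin 2) F3)) : blk33 N 0 0 = N 0 0 0 0 := rfl
private lemma blk33_app_0_1 (N : Matrix (Fin 3) (Fin 3) (Matrix (Fin 2) (Fin 2) F3)) : blk33 N 0 1 = N 0 0 0 1 := rfl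
private lemma blk33_app_0_2 (N : Matrix (Fin 3) (Fin 3) (Matrix (Fin 2) (Fin 2) F3)) : blk33 N 0 2 = N 0 1 0 0 := rfl
private lemma blk33_app_0_3 (N : Matrix (Fin 3) (Fin 3) (Matrix (Fin 2) (Fin 2) F3)) : blk33 N 0 3 = N 0 1 0 1 := rfl
private lemma blk33_app_0_4 (N : Matrix (Fin 3) (Fin 3) (Matrix (Fin 2) (Fin 2) F3)) : blk33 N 0 4 = N 0 2 0 0 := rfl
private lemma blk33_app_0_5 (N : Matrix (Fin 3) (Fin 3) (Matrix (Fin 2) (Fin 2) F3)) : blk33 N 0 5 = N 0 2 0 1 := rfl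
private lemma blk33_app_1_0 (N : Matrix (Fin 3) (Fin 3) (Matrix (Fin 2) (Fin 2) F3)) : blk33 N 1 0 = N 0 0 1 0 := rfl
private lemma blk33_app_1_1 (N : Matrix (Fin 3) (Fin 3) (Matrix (Fin 2) (Fin 2) F3)) : blk33 N 1 1 = N 0 0 1 1 := rfl
private lemma blk33_app_1_2 (N : Matrix (Fin 3) (Fin 3) (Matrix (Fin 2) (Fin 2) F3)) : blk33 N 1 2 = N 0 1 1 0 := rfl
private lemma blk33_app_1_3 (N : Matrix (Fin 3) (Fin 3) (Matrix (Fin 2) (Fin 2) F3)) : blk33 N 1 3 = N 0 1 1 1 := rfl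
private lemma blk33_app_1_4 (N : Matrix (Fin 3) (Fin 3) (Matrix (Fin 2) (Fin 2) F3)) : blk33 N 1 4 = N 0 2 1 0 := rfl
private lemma blk33_app_1_5 (N : Matrix (Fin 3) (Fin 3) (Matrix (Fin 2) (Fin 2) F3)) : blk33 N 1 5 = N 0 2 1 1 := rfl
private lemma blk33_app_2_0 (N : Matrix (Fin 3) (Fin 3) (Matrix (Fin 2) (Fin 2) F3)) : blk33 N 2 0 = N 1 0 0 0 := rfl
private lemma blk33_app_2_1 (N : Matrix (Fin 3) (Fin 3) (Matrix (Fin 2) (Fin 2) F3)) : blk33 N 2 1 = N 1 0 0 1 := rfl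
private lemma blk33_app_2_2 (N : Matrix (Fin 3) (Fin 3) (Matrix (Fin 2) (Fin 2) F3)) : blk33 N 2 2 = N 1 1 0 0 := rfl
private lemma blk33_app_2_3 (N : Matrix (Fin 3) (Fin 3) (Matrix (Fin 2) (Fin 2) F3)) : blk33 N 2 3 = N 1 1 0 1 := rfl
private lemma blk33_app_2_4 (N : Matrix (Fin 3) (Fin 3) (Matrix (Fin 2) (Fin 2) F3)) : blk33 N 2 4 = N 1 2 0 0 := rfl
private lemma blk33_app_2_5 (N : Matrix (Fin 3) (Fin 3) (Matrix (Fin 2) (Fin 2) F3)) : blk33 N 2 5 = N 1 2 0 1 := rfl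
private lemma blk33_app_3_0 (N : Matrix (Fin 3) (Fin 3) (Matrix (Fin 2) (Fin 2) F3)) : blk33 N 3 0 = N 1 0 1 0 := rfl
private lemma blk33_app_3_1 (N : Matrix (Fin 3) (Fin 3) (Matrix (Fin 2) (Fin 2) F3)) : blk33 N 3 1 = N 1 0 1 1 := rfl
private lemma blk33_app_3_2 (N : Matrix (Fin 3) (Fin 3) (Matrix (Fin 2) (Fin 2) F3)) : blk33 N 3 2 = N 1 1 1 0 := rfl
private lemma blk33_app_3_3 (N : Matrix (Fin 3) (Fin 3) (Matrix (Fin 2) (Fin 2) F3)) : blk33 N 3 3 = N 1 1 1 1 := rfl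
private lemma blk33_app_3_4 (N : Matrix (Fin 3) (Fin 3) (Matrix (Fin 2) (Fin 2) F3)) : blk33 N 3 4 = N 1 2 1 0 := rfl
private lemma blk33_app_3_5 (N : Matrix (Fin 3) (Fin 3) (Matrix (Fin 2) (Fin 2) F3)) : blk33 N 3 5 = N 1 2 1 1 := rfl
private lemma blk33_app_4_0 (N : Matrix (Fin 3) (Fin 3) (Matrix (Fin 2) (Fin 2) F3)) : blk33 N 4 0 = N 2 0 0 0 := rfl
private lemma blk33_app_4_1 (N : Matrix (Fin 3) (Fin 3) (Matrix (Fin 2) (Fin 2) F3)) : blk33 N 4 1 = N 2 0 0 1 := rfl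
private lemma blk33_app_4_2 (N : Matrix (Fin 3) (Fin 3) (Matrix (Fin 2) (Fin 2) F3)) : blk33 N 4 2 = N 2 1 0 0 := rfl
private lemma blk33_app_4_3 (N : Matrix (Fin 3) (Fin 3) (Matrix (Fin 2) (Fin 2) F3)) : blk33 N 4 3 = N 2 1 0 1 := rfl
private lemma blk33_app_4_4 (N : Matrix (Fin 3) (Fin 3) (Matrix (Fin 2) (Fin 2) F3)) : blk33 N 4 4 = N 2 2 0 0 := rfl
private lemma blk33_app_4_5 (N : Matrix (Fin 3) (Fin 3) (Matrix (Fin 2) (Fin 2) F3)) : blk33 N 4 5 = N 2 2 0 1 := rfl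
private lemma blk33_app_5_0 (N : Matrix (Fin 3) (Fin 3) (Matrix (Fin 2) (Fin 2) F3)) : blk33 N 5 0 = N 2 0 1 0 := rfl
private lemma blk33_app_5_1 (N : Matrix (Fin 3) (Fin 3) (Matrix (Fin 2) (Fin 2) F3)) : blk33 N 5 1 = N 2 0 1 1 := rfl
private lemma blk33_app_5_2 (N : Matrix (Fin 3) (Fin 3) (Matrix (Fin 2) (Fin 2) F3)) : blk33 N 5 2 = N 2 1 1 0 := rfl
private lemma blk33_app_5_3 (N : Matrix (Fin 3) (Fin 3) (Matrix (Fin 2) (Fin 2) F3)) : blk33 N 5 3 = N 2 1 1 1 := rfl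
private lemma blk33_app_5_4 (N : Matrix (Fin 3) (Fin 3) (Matrix (Fin 2) (Fin 2) F3)) : blk33 N 5 4 = N 2 2 1 0 := rfl
private lemma blk33_app_5_5 (N : Matrix (Fin 3) (Fin 3) (Matrix (Fin 2) (Fin 2) F3)) : blk33 N 5 5 = N 2 2 1 1 := rfl

private lemma iso_iff (M : Matrix (Fin 6) (Fin 6) F3) (P : Matrix (Fin 2) (Fin 6) F3) :
    (∀ x ∈ lineOf P, ∀ y ∈ lineOf P, x ⬝ᵥ M.mulVec y = 0) ↔
    ∀ i j : Fin 2, P i ⬝ᵥ M.mulVec (P j) = 0 := by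
  constructor
  · intro h i j
    exact h _ (Submodule.subset_span ⟨i, rfl⟩) _ (Submodule.subset_span ⟨j, rfl⟩)
  · intro h x hx y hy
    have claim : ∀ x ∈ lineOf P, ∀ j : Fin 2, x ⬝ᵥ M.mulVec (P j) = 0 := by
      intro x hx
      induction hx using Submodule.span_induction with
      | mem z hz => obtain ⟨i, rfl⟩ := hz; exact h i
      | zero => intro j; simp
      | add a b _ _ ha hb => intro j; rw [add_dotProduct, ha j, hb j, add_zero]
      | smul c a _ ha => intro j; rw [smul_dotProduct, ha j, smul_zero]
    induction hy using Submodule.span_induction with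
    | mem z hz => obtain ⟨j, rfl⟩ := hz; exact claim x hx j
    | zero => simp [Matrix.mulVec_zero]
    | add a b _ _ ha hb => rw [Matrix.mulVec_add, dotProduct_add, ha, hb, add_zero]
    | smul c a _ ha => rw [Matrix.mulVec_smul, dotProduct_smul, ha, smul_zero]

set_option maxHeartbeats 1000000 in
private lemma Qlemma (X Y Z : Matrix (Fin 2) (Fin 2) F3)
    (N : Matrix (Fin 3) (Fin 3) (Matrix (Fin 2) (Fin 2) F3)) (i j : Fin 2) :
    (blk3 X Y Z) i ⬝ᵥ (blk33 N).mulVec ((blk3 X Y Z) j) =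
    (X * N 0 0 * Xᵀ + X * N 0 1 * Yᵀ + X * N 0 2 * Zᵀ +
     Y * N 1 0 * Xᵀ + Y * N 1 1 * Yᵀ + Y * N 1 2 * Zᵀ +
     Z * N 2 0 * Xᵀ + Z * N 2 1 * Yᵀ + Z * N 2 2 * Zᵀ) i j := by
  simp only [dotProduct, Matrix.mulVec, Fin.sum_univ_six, blk3_app_0, blk3_app_1, blk3_app_2, blk3_app_3, blk3_app_4, blk3_app_5, blk33_app_0_0, blk33_app_0_1, blk33_app_0_2, blk33_app_0_3, blk33_app_0_4, blk33_app_0_5, blk33_app_1_0, blk33_app_1_1, blk33_app_1_2, blk33_app_1_3, blk33_app_1_4, blk33_app_1_5, blk33_app_2_0, blk33_app_2_1, blk33_app_2_2, blk33_app_2_3, blk33_app_2_4, blk33_app_2_5, blk33_app_3_0, blk33_app_3_1, blk33_app_3_2, blk33_app_3_3, blk33_app_3_4, blk33_app_3_5, blk33_app_4_0, blk33_app_4_1, blk33_app_4_2, blk33_app_4_3, blk33_app_4_4, blk33_app_4_5, blk33_app_5_0, blk33_app_5_1, blk33_app_5_2, blk33_app_5_3, blk33_app_5_4, blk33_app_5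_5,
    Matrix.add_apply, Matrix.mul_apply, Fin.sum_univ_two, Matrix.transpose_apply]
  ring

private lemma blk_decomp (M : Matrix (Fin 6) (Fin 6) F3) :
    blk33 (Matrix.of fun p q => blkAt M p q) = M := by
  ext i j
  simp only [blk33, blkAt, Matrix.of_apply]
  congr 1 <;> · rw [Fin.ext_iff]; simp; omega

/-- For 2×2 matrices `R`, `S` and a skew-symmetric 6×6 matrix `M` over
`GF(3)`, the five lines represented by `(I O O)`, `(O I O)`, `(O O I)`, `(I I I)`,
`(I R S)` are all totally isotropic with respect to `M` if and only if `M` has block form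
`[[O,A,B],[-Aᵀ,O,C],[-Bᵀ,-Cᵀ,O]]` with `A + B + C` and `A Rᵀ + B Sᵀ + R C Sᵀ` both
symmetric. -/
theorem stmt7 (R S : Matrix (Fin 2) (Fin 2) F3)
    (M : Matrix (Fin 6) (Fin 6) F3) (hskew : Mᵀ = -M) :
    (∀ ℓ ∈ ({lineOf (blk3 1 0 0), lineOf (blk3 0 1 0), lineOf (blk3 0 0 1),
        lineOf (blk3 1 1 1), lineOf (blk3 1 R S)} : Set (Submodule F3 V6)),
      ∀ x ∈ ℓ, ∀ y ∈ ℓ, x ⬝ᵥ M.mulVec y = 0) ↔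
    ∃ A B C : Matrix (Fin 2) (Fin 2) F3,
      M = blk33 !![0, A, B; -Aᵀ, 0, C; -Bᵀ, -Cᵀ, 0] ∧
      (A + B + C).IsSymm ∧ (A * Rᵀ + B * Sᵀ + R * C * Sᵀ).IsSymm := by
  have hsk : ∀ p q : Fin 3, blkAt M q p = -(blkAt M p q)ᵀ := by
    intro p q
    refine Matrix.ext fun a b => ?_
    have h := congrFun (congrFun hskew ⟨2*(p:ℕ)+(b:ℕ), by omega⟩) ⟨2*(q:ℕ)+(a:ℕ), by omega⟩
    simp only [Matrix.transpose_apply, Matrix.neg_apply] at h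
    simp only [blkAt, Matrix.of_apply, Matrix.neg_apply, Matrix.transpose_apply]
    exact h
  constructor
  · intro h
    have h1 := (iso_iff M (blk3 1 0 0)).mp (h _ (by simp))
    have h2 := (iso_iff M (blk3 0 1 0)).mp (h _ (by simp))
    have h3 := (iso_iff M (blk3 0 0 1)).mp (h _ (by simp))
    have h4 := (iso_iff M (blk3 1 1 1)).mp (h _ (by simp))
    have h5 := (iso_iff M (blk3 1 R S)).mp (h _ (by simp))
    rw [← blk_decomp M] at h1 h2 h3 h4 h5
    simp only [Qlemma, Matrix.of_apply, Matrix.transpose_one, Matrix.transpose_zero,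
      Matrix.mul_zero, Matrix.zero_mul, mul_one, one_mul, add_zero, zero_add] at h1 h2 h3 h4 h5
    have e00 : blkAt M 0 0 = 0 := Matrix.ext fun i j => h1 i j
    have e11 : blkAt M 1 1 = 0 := Matrix.ext fun i j => h2 i j
    have e22 : blkAt M 2 2 = 0 := Matrix.ext fun i j => h3 i j
    refine ⟨blkAt M 0 1, blkAt M 0 2, blkAt M 1 2, ?_, ?_, ?_⟩
    · conv_lhs => rw [← blk_decomp M]
      refine congrArg blk33 (Matrix.ext fun p q => ?_)
      fin_cases p <;> fin_cases q <;>
        simp only [Matrix.of_apply, Fin.mk_zero, Fin.mk_one,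
          show (⟨2, by omega⟩ : Fin 3) = 2 from rfl, Matrix.cons_val', Matrix.cons_val_zero,
          Matrix.cons_val_one, Matrix.head_cons, Matrix.cons_val_two, Matrix.tail_cons,
          Matrix.head_fin_const, Matrix.empty_val'] <;>
        first
          | rfl
          | exact e00
          | exact e11
          | exact e22
          | exact hsk 0 1
          | exact hsk 0 2
          | exact hsk 1 2
    · rw [e00, e11, e22, hsk 0 1, hsk 0 2, hsk 1 2] at h4
      show _ᵀ = _
      refine Matrix.ext fun i j => ?_
      have hh := h4 i j
      simp only [Matrix.add_apply, Matrix.neg_apply, Matrix.transpose_apply,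
        Matrix.zero_apply] at hh ⊢
      linear_combination -hh
    · rw [e00, e11, e22, hsk 0 1, hsk 0 2, hsk 1 2] at h5
      show _ᵀ = _
      refine Matrix.ext fun i j => ?_
      have hh := h5 i j
      simp only [Matrix.add_apply, Matrix.neg_apply, Matrix.transpose_apply, Matrix.mul_apply,
        Matrix.zero_apply, Fin.sum_univ_two] at hh ⊢
      linear_combination -hh
  · rintro ⟨A, B, C, rfl, hs1, hs2⟩
    intro ℓ hℓ
    simp only [Set.mem_insert_iff, Set.mem_singleton_iff] at hℓ
    have lit : ∀ a b : Fin 3,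
        (!![0, A, B; -Aᵀ, 0, C; -Bᵀ, -Cᵀ, 0] : Matrix (Fin 3) (Fin 3) _) a b =
        ![![0, A, B], ![-Aᵀ, 0, C], ![-Bᵀ, -Cᵀ, 0]] a b := fun a b => rfl
    rcases hℓ with rfl | rfl | rfl | rfl | rfl <;> rw [iso_iff] <;> intro i j <;>
        rw [Qlemma] <;>
        simp only [lit, Matrix.cons_val_zero, Matrix.cons_val_one, Matrix.head_cons,
          Matrix.cons_val_two, Matrix.tail_cons, Matrix.transpose_zero, Matrix.transpose_one,
          Matrix.mul_zero, Matrix.zero_mul, mul_one, one_mul, add_zero, zero_add,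
          Matrix.zero_apply]
    · have hh := congrFun (congrFun hs1 i) j
      simp only [Matrix.transpose_apply, Matrix.add_apply, Matrix.neg_apply] at hh ⊢
      linear_combination -hh
    · have hh := congrFun (congrFun hs2 i) j
      simp only [Matrix.transpose_apply, Matrix.add_apply, Matrix.neg_apply, Matrix.mul_apply,
        Fin.sum_univ_two] at hh ⊢
      linear_combination -hh
end
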